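/- Let p and q be odd prime numbers with pq ≢ 1 (mod 8) and pq ≢ −1 (mod 8). Then there is no pair (w, z) ∈ ℚ₂ × ℚ₂ satisfying w² = 2 + 2pq·z⁴. -/

import Mathlib

lemma L1 : ∀ C W Z : ZMod (2^5), (C.val % 8 = 3 ∨ C.val % 8 = 5) → W^2 ≠ 2 + 2*C*Z^4 := by decide
lemma L2 : ∀ C W T : ZMod (2^5), (C.val % 8 = 3 ∨ C.val % 8 = 5) → W^2 ≠ 2*(2*T)^4 + 2*C := by decide

lemma mul41 {a b c d : ℝ} (ha0 : 0 ≤ a) (hb0 : 0 ≤ b) (hc0 : 0 ≤ c) (hd0 : 0 ≤ d)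
    (ha : a ≤ 1) (hb : b ≤ 1) (hc : c ≤ 1) (hd : d ≤ 1) : a * b * c * d ≤ 1 :=
  mul_le_one₀ (mul_le_one₀ (mul_le_one₀ ha hb0 hb) hc0 hc) hd0 hd

/-- For odd primes `p, q` with `pq ≢ ±1 (mod 8)`, the equation
`w² = 2 + 2pq·z⁴` has no solution `(w, z) ∈ ℚ₂ × ℚ₂`. -/
theorem stmt3 (p q : ℕ) (hp : p.Prime) (hq : q.Prime) (hp2 : p ≠ 2) (hq2 : q ≠ 2)
    (h1 : (p * q) % 8 ≠ 1) (h7 : (p * q) % 8 ≠ 7) :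
    ¬∃ w z : ℚ_[2], w ^ 2 = 2 + 2 * (p : ℚ_[2]) * (q : ℚ_[2]) * z ^ 4 := by
  rintro ⟨w, z, h⟩
  have hodd : (p * q) % 2 = 1 :=
    Nat.odd_iff.mp ((hp.odd_of_ne_two hp2).mul (hq.odd_of_ne_two hq2))
  have hC : (((p*q : ℕ) : ZMod (2^5))).val % 8 = 3 ∨ (((p*q : ℕ) : ZMod (2^5))).val % 8 = 5 := by
    have hv : (((p*q : ℕ) : ZMod (2^5))).val = (p*q) % 2^5 := ZMod.val_natCast _ _
    omega
  set φ := PadicInt.toZModPow (p := 2) 5 with hφ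
  have h2 : ‖(2 : ℚ_[2])‖ ≤ 1 := by
    simpa using Padic.norm_int_le_one (p := 2) 2
  have hnp : ‖(p : ℚ_[2])‖ ≤ 1 := by
    simpa using Padic.norm_int_le_one (p := 2) p
  have hnq : ‖(q : ℚ_[2])‖ ≤ 1 := by
    simpa using Padic.norm_int_le_one (p := 2) q
  by_cases hz : ‖z‖ ≤ 1
  · -- z integral
    have hrhs : ‖2 + 2 * (p : ℚ_[2]) * (q : ℚ_[2]) * z ^ 4‖ ≤ 1 := by
      refine le_trans (Padic.nonarchimedean _ _) (max_le h2 ?_)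
      calc ‖2 * (p : ℚ_[2]) * (q : ℚ_[2]) * z ^ 4‖
          = ‖(2:ℚ_[2])‖ * ‖(p : ℚ_[2])‖ * ‖(q : ℚ_[2])‖ * ‖z‖^4 := by
            rw [norm_mul, norm_mul, norm_mul, norm_pow]
        _ ≤ 1 := mul41 (norm_nonneg _) (norm_nonneg _) (norm_nonneg _)
            (pow_nonneg (norm_nonneg z) 4) h2 hnp hnq (pow_le_one₀ (norm_nonneg z) hz)
    have hw : ‖w‖ ≤ 1 := by
      have h1' : ‖w‖^2 ≤ 1 := by rw [← norm_pow, h]; exact hrhs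
      nlinarith [norm_nonneg w]
    set W : ℤ_[2] := ⟨w, hw⟩ with hW
    set Z : ℤ_[2] := ⟨z, hz⟩ with hZ
    have hE : W^2 = 2 + 2*(p:ℤ_[2])*(q:ℤ_[2])*Z^4 := by
      apply Subtype.coe_injective
      push_cast
      exact h
    have hmap := congrArg φ hE
    simp only [map_pow, map_add, map_mul, map_ofNat, map_natCast] at hmap
    refine L1 _ (φ W) (φ Z) hC ?_
    rw [hmap]
    push_cast
    ring
  · -- z non-integral; work with z⁻¹
    push_neg at hz
    have hz0 : z ≠ 0 := by
      intro h0; rw [h0, norm_zero] at hz; linarith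
    have key : z^4 * (z⁻¹)^4 = 1 := by
      rw [← mul_pow, mul_inv_cancel₀ hz0, one_pow]
    have h' : (w * (z⁻¹)^2)^2 = 2*(z⁻¹)^4 + 2*(p:ℚ_[2])*(q:ℚ_[2]) := by
      calc (w * (z⁻¹)^2)^2 = w^2 * (z⁻¹)^4 := by ring
        _ = (2 + 2*(p:ℚ_[2])*(q:ℚ_[2])*z^4) * (z⁻¹)^4 := by rw [h]
        _ = 2*(z⁻¹)^4 + 2*(p:ℚ_[2])*(q:ℚ_[2]) := by
            linear_combination (2*(p:ℚ_[2])*(q:ℚ_[2])) * key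
    have hzi : ‖z⁻¹‖ < 1 := by
      rw [norm_inv]; exact inv_lt_one_of_one_lt₀ hz
    have hzi' : ‖z⁻¹‖ ≤ 1 := le_of_lt hzi
    have hrhs : ‖2*(z⁻¹)^4 + 2*(p:ℚ_[2])*(q:ℚ_[2])‖ ≤ 1 := by
      refine le_trans (Padic.nonarchimedean _ _) (max_le ?_ ?_)
      · calc ‖2*(z⁻¹)^4‖ = ‖(2:ℚ_[2])‖ * 1 * 1 * ‖z⁻¹‖^4 := by
              rw [norm_mul, norm_pow]; ring
          _ ≤ 1 := mul41 (norm_nonneg _) zero_le_one zero_le_one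
              (pow_nonneg (norm_nonneg _) 4) h2 le_rfl le_rfl
              (pow_le_one₀ (norm_nonneg _) hzi')
      · calc ‖2*(p:ℚ_[2])*(q:ℚ_[2])‖ = ‖(2:ℚ_[2])‖ * ‖(p:ℚ_[2])‖ * ‖(q:ℚ_[2])‖ * 1 := by
              rw [norm_mul, norm_mul]; ring
          _ ≤ 1 := mul41 (norm_nonneg _) (norm_nonneg _) (norm_nonneg _) zero_le_one
              h2 hnp hnq le_rfl
    have hw : ‖w * (z⁻¹)^2‖ ≤ 1 := by
      have h1' : ‖w * (z⁻¹)^2‖^2 ≤ 1 := by rw [← norm_pow, h']; exact hrhs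
      nlinarith [norm_nonneg (w * (z⁻¹)^2)]
    set W : ℤ_[2] := ⟨w * (z⁻¹)^2, hw⟩ with hWdef
    set Z : ℤ_[2] := ⟨z⁻¹, hzi'⟩ with hZdef
    have hdvd : (2 : ℤ_[2]) ∣ Z := by
      have := (PadicInt.norm_lt_one_iff_dvd Z).mp (by simpa [hZdef] using hzi)
      exact_mod_cast this
    obtain ⟨t, ht⟩ := hdvd
    have hE : W^2 = 2*Z^4 + 2*(p:ℤ_[2])*(q:ℤ_[2]) := by
      apply Subtype.coe_injective
      push_cast
      exact h'
    rw [ht] at hE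
    have hmap := congrArg φ hE
    simp only [map_pow, map_add, map_mul, map_ofNat, map_natCast] at hmap
    refine L2 _ (φ W) (φ t) hC ?_
    rw [hmap]
    push_cast
    ring
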